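/- Let λ, p ∈ (0,1), ν = ν_λ^p. Suppose x ∈ I_λ has a unique expansion i and dist(F_β^n x, C_λ) ≥ δ > 0 for all n. If the frequency r = freq₀(i) exists, then the local dimension d(ν,x) = lim_{ρ→0} log ν(B(x,ρ))/log ρ exists and equals (r·log p + (1−r)·log(1−p)) / log λ. -/

import Mathlib

open MeasureTheory

noncomputable section

def binSeq (i : ℕ → ℕ) : Prop := ∀ n, i n ≤ 1

def piL (l : ℝ) (i : ℕ → ℕ) : ℝ := ∑' n : ℕ, (i n : ℝ) * l ^ (n + 1)

def shiftN (i : ℕ → ℕ) (n : ℕ) : ℕ → ℕ := fun m => i (m + n)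

def countZeros (i : ℕ → ℕ) (n : ℕ) : ℕ := ((Finset.range n).filter fun m => i m = 0).card

lemma piL_summable {l : ℝ} (hl0 : 0 < l) (hl1 : l < 1) {i : ℕ → ℕ} (hib : binSeq i) :
    Summable (fun n : ℕ => (i n : ℝ) * l ^ (n + 1)) := by
  refine Summable.of_nonneg_of_le (fun n => by positivity) (fun n => ?_)
    ((summable_geometric_of_lt_one hl0.le hl1).comp_injective (add_left_injective 1))
  have h1 : (i n : ℝ) ≤ 1 := by exact_mod_cast hib n
  show (i n : ℝ) * l ^ (n+1) ≤ l ^ (n+1)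
  nlinarith [pow_pos hl0 (n+1)]

lemma piL_nonneg {l : ℝ} (hl0 : 0 < l) (hl1 : l < 1) {i : ℕ → ℕ} (hib : binSeq i) :
    0 ≤ piL l i :=
  tsum_nonneg (fun n => by positivity)

lemma tsum_geom {l : ℝ} (hl0 : 0 < l) (hl1 : l < 1) :
    ∑' n : ℕ, l ^ (n + 1) = l / (1 - l) := by
  have : ∑' n : ℕ, l ^ (n + 1) = ∑' n : ℕ, l * l ^ n := by
    congr 1; ext n; ring
  rw [this, tsum_mul_left, tsum_geometric_of_lt_one hl0.le hl1]
  field_simp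

lemma piL_le {l : ℝ} (hl0 : 0 < l) (hl1 : l < 1) {i : ℕ → ℕ} (hib : binSeq i) :
    piL l i ≤ l / (1 - l) := by
  rw [← tsum_geom hl0 hl1]
  refine (piL_summable hl0 hl1 hib).tsum_le_tsum (fun n => ?_)
    ((summable_geometric_of_lt_one hl0.le hl1).comp_injective (add_left_injective 1))
  have h1 : (i n : ℝ) ≤ 1 := by exact_mod_cast hib n
  nlinarith [pow_pos hl0 (n+1)]

lemma piL_step {l : ℝ} (hl0 : 0 < l) (hl1 : l < 1) {i : ℕ → ℕ} (hib : binSeq i) :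
    piL l i = l * ((i 0 : ℝ) + piL l (shiftN i 1)) := by
  have hs : Summable (fun n : ℕ => (i n : ℝ) * l ^ (n + 1)) := piL_summable hl0 hl1 hib
  rw [piL, hs.tsum_eq_zero_add]
  have : ∀ n : ℕ, (i (n+1) : ℝ) * l ^ (n + 1 + 1) = l * ((i (n+1) : ℝ) * l ^ (n+1)) := by
    intro n; ring
  rw [tsum_congr this, tsum_mul_left]
  simp only [piL, shiftN]
  ring

lemma affBallPreimage (l c z ρ : ℝ) (hl0 : 0 < l) :
    (fun y => l * (y + c)) ⁻¹' Metric.ball z ρ = Metric.ball (z / l - c) (ρ / l) := by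
  have key : ∀ y : ℝ, (y - (z / l - c)) * l = l * (y + c) - z := by
    intro y; field_simp; ring
  ext y
  simp only [Set.mem_preimage, Metric.mem_ball, Real.dist_eq]
  rw [lt_div_iff₀ hl0, ← abs_of_pos hl0, ← abs_mul, abs_of_pos hl0, key]

lemma unfold_ball {l p : ℝ} (hl0 : 0 < l) (ν : Measure ℝ)
    (hss : ν = ENNReal.ofReal p • ν.map (fun x => l * (x + 0)) +
      ENNReal.ofReal (1 - p) • ν.map (fun x => l * (x + 1))) (z ρ : ℝ) :
    ν (Metric.ball z ρ) = ENNReal.ofReal p * ν (Metric.ball (z / l) (ρ / l)) +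
      ENNReal.ofReal (1 - p) * ν (Metric.ball (z / l - 1) (ρ / l)) := by
  have hm : ∀ c : ℝ, Measurable (fun x : ℝ => l * (x + c)) :=
    fun c => (measurable_id.add_const c).const_mul l
  conv_lhs => rw [hss]
  rw [Measure.add_apply, Measure.smul_apply, Measure.smul_apply,
    Measure.map_apply (hm 0) measurableSet_ball,
    Measure.map_apply (hm 1) measurableSet_ball,
    affBallPreimage l 0 z ρ hl0, affBallPreimage l 1 z ρ hl0, sub_zero,
    smul_eq_mul, smul_eq_mul]

lemma shiftN_binSeq {j : ℕ → ℕ} (hjb : binSeq j) (n : ℕ) : binSeq (shiftN j n) :=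
  fun m => hjb (m + n)

lemma step_eq {l p δ : ℝ} (hl0 : 0 < l) (hl1 : l < 1) (hδ : 0 < δ) (ν : Measure ℝ)
    (hss : ν = ENNReal.ofReal p • ν.map (fun x => l * (x + 0)) +
      ENNReal.ofReal (1 - p) • ν.map (fun x => l * (x + 1)))
    (hsupp : ν (Set.Icc 0 (l / (1 - l)))ᶜ = 0)
    {j : ℕ → ℕ} (hjb : binSeq j)
    (hsep0 : j 0 = 0 → piL l j ≤ l - δ)
    (hsep1 : j 0 = 1 → piL l j ≥ l ^ 2 / (1 - l) + δ)
    {ρ : ℝ} (hρ0 : 0 < ρ) (hρ : ρ ≤ δ) :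
    ν (Metric.ball (piL l j) ρ) =
      (if j 0 = 0 then ENNReal.ofReal p else ENNReal.ofReal (1 - p)) *
        ν (Metric.ball (piL l (shiftN j 1)) (ρ / l)) := by
  set y := piL l j with hy_def
  set F := piL l (shiftN j 1) with hF_def
  have hy : y = l * ((j 0 : ℝ) + F) := piL_step hl0 hl1 hjb
  have hl1' : 0 < 1 - l := by linarith
  rw [unfold_ball hl0 ν hss]
  rcases Nat.le_one_iff_eq_zero_or_eq_one.mp (hjb 0) with h0 | h0
  · have hF : y ≤ l - δ := hsep0 h0
    have hyl : y / l = F := by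
      rw [hy, h0]; push_cast; field_simp; ring
    have hz : ν (Metric.ball (y / l - 1) (ρ / l)) = 0 := by
      refine measure_mono_null (fun z hz => ?_) hsupp
      simp only [Metric.mem_ball, Real.dist_eq, abs_lt] at hz
      intro hmem
      rcases hmem with ⟨hz0, _⟩
      have h1 : z < y / l - 1 + ρ / l := by linarith [hz.2]
      have h2 : (y + ρ) / l ≤ 1 := by
        rw [div_le_one hl0]; linarith
      have h3 : y / l + ρ / l = (y + ρ) / l := (add_div y ρ l).symm
      linarith
    rw [if_pos h0, hz, mul_zero, add_zero, hyl]
  · have hF : y ≥ l ^ 2 / (1 - l) + δ := hsep1 h0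
    have hyl : y / l = 1 + F := by
      rw [hy, h0]; push_cast; field_simp
    have hz : ν (Metric.ball (y / l) (ρ / l)) = 0 := by
      refine measure_mono_null (fun z hz => ?_) hsupp
      simp only [Metric.mem_ball, Real.dist_eq, abs_lt] at hz
      intro hmem
      rcases hmem with ⟨_, hz1⟩
      have h1 : y / l - ρ / l < z := by linarith [hz.1]
      rw [div_sub_div_same] at h1
      have h4 : l ^ 2 / (1 - l) ≤ y - ρ := by linarith
      have h6 : l ^ 2 / (1 - l) * (1 - l) = l ^ 2 := div_mul_cancel₀ _ (ne_of_gt hl1')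
      have h5 : l / (1 - l) ≤ (y - ρ) / l := by
        rw [div_le_div_iff₀ hl1' hl0]
        nlinarith [mul_le_mul_of_nonneg_right h4 hl1'.le]
      linarith
    rw [if_neg (by omega), hz, mul_zero, zero_add]
    congr 1
    rw [hyl]; ring

lemma shiftN_shiftN (i : ℕ → ℕ) (n : ℕ) : shiftN (shiftN i n) 1 = shiftN i (n + 1) := by
  funext m; simp only [shiftN]; congr 1; omega

lemma shiftN_zero_apply (i : ℕ → ℕ) (n : ℕ) : shiftN i n 0 = i n := by
  simp [shiftN]

lemma iter_eq {l p δ : ℝ} (hl0 : 0 < l) (hl1 : l < 1) (hδ : 0 < δ) (ν : Measure ℝ)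
    (hss : ν = ENNReal.ofReal p • ν.map (fun x => l * (x + 0)) +
      ENNReal.ofReal (1 - p) • ν.map (fun x => l * (x + 1)))
    (hsupp : ν (Set.Icc 0 (l / (1 - l)))ᶜ = 0)
    {i : ℕ → ℕ} (hib : binSeq i)
    (horb : ∀ n : ℕ, (i n = 0 → piL l (shiftN i n) ≤ l - δ) ∧
      (i n = 1 → piL l (shiftN i n) ≥ l ^ 2 / (1 - l) + δ)) :
    ∀ (n : ℕ) (ρ : ℝ), 0 < ρ → ρ ≤ δ →
      ν (Metric.ball (piL l i) (ρ * l ^ n)) =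
        (∏ k ∈ Finset.range n,
          if i k = 0 then ENNReal.ofReal p else ENNReal.ofReal (1 - p)) *
          ν (Metric.ball (piL l (shiftN i n)) ρ) := by
  intro n
  induction n with
  | zero => intro ρ _ _; rw [Finset.range_zero, Finset.prod_empty, one_mul, pow_zero, mul_one]; rfl
  | succ n ih =>
    intro ρ hρ0 hρ
    have hρl0 : 0 < ρ * l := mul_pos hρ0 hl0
    have hρll : ρ * l ≤ δ := by nlinarith
    have h1 : ρ * l ^ (n + 1) = (ρ * l) * l ^ n := by ring
    rw [h1, ih (ρ * l) hρl0 hρll]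
    have hstep := step_eq hl0 hl1 hδ ν hss hsupp (shiftN_binSeq hib n)
      (by rw [shiftN_zero_apply]; exact (horb n).1)
      (by rw [shiftN_zero_apply]; exact (horb n).2)
      hρl0 hρll
    rw [hstep, shiftN_zero_apply, shiftN_shiftN, mul_div_cancel_right₀ _ (ne_of_gt hl0),
      Finset.prod_range_succ, mul_assoc]

lemma lower_bound {l p : ℝ} (hl0 : 0 < l) (hl1 : l < 1) (hp0 : 0 < p) (hp1 : p < 1)
    (ν : Measure ℝ) [IsProbabilityMeasure ν]
    (hss : ν = ENNReal.ofReal p • ν.map (fun x => l * (x + 0)) +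
      ENNReal.ofReal (1 - p) • ν.map (fun x => l * (x + 1)))
    (hsupp : ν (Set.Icc 0 (l / (1 - l)))ᶜ = 0) :
    ∀ (m : ℕ) (j : ℕ → ℕ), binSeq j → ∀ ε : ℝ, l / (1 - l) * l ^ m < ε →
      ENNReal.ofReal ((min p (1 - p)) ^ m) ≤ ν (Metric.ball (piL l j) ε) := by
  have hl1' : 0 < 1 - l := by linarith
  intro m
  induction m with
  | zero =>
    intro j hjb ε hε
    rw [pow_zero] at hε
    rw [pow_zero, ENNReal.ofReal_one]
    have hIcc : Set.Icc (0:ℝ) (l / (1 - l)) ⊆ Metric.ball (piL l j) ε := by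
      intro z hz
      rcases hz with ⟨hz0, hz1⟩
      have hy0 : 0 ≤ piL l j := piL_nonneg hl0 hl1 hjb
      have hy1 : piL l j ≤ l / (1 - l) := piL_le hl0 hl1 hjb
      rw [Metric.mem_ball, Real.dist_eq, abs_lt]
      constructor <;> linarith
    have h1 : ν (Set.Icc 0 (l / (1 - l))) = 1 := by
      have h2 := measure_add_measure_compl (μ := ν) (measurableSet_Icc (a := (0:ℝ)) (b := l / (1 - l)))
      rw [hsupp, add_zero, measure_univ] at h2
      exact h2
    calc (1 : ENNReal) = ν (Set.Icc 0 (l / (1 - l))) := h1.symm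
      _ ≤ ν (Metric.ball (piL l j) ε) := measure_mono hIcc
  | succ m ih =>
    intro j hjb ε hε
    have hε0 : 0 < ε := lt_trans (by positivity) hε
    have hεl : l / (1 - l) * l ^ m < ε / l := by
      rw [lt_div_iff₀ hl0]
      calc l / (1 - l) * l ^ m * l = l / (1 - l) * l ^ (m + 1) := by ring
        _ < ε := hε
    have hIH := ih (shiftN j 1) (shiftN_binSeq hjb 1) (ε / l) hεl
    have hmin0 : (0:ℝ) ≤ min p (1 - p) := le_min hp0.le (by linarith)
    rw [pow_succ', ENNReal.ofReal_mul hmin0]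
    rw [unfold_ball hl0 ν hss]
    have hy : piL l j = l * ((j 0 : ℝ) + piL l (shiftN j 1)) := piL_step hl0 hl1 hjb
    rcases Nat.le_one_iff_eq_zero_or_eq_one.mp (hjb 0) with h0 | h0
    · have hyl : piL l j / l = piL l (shiftN j 1) := by
        rw [hy, h0]; push_cast; field_simp; ring
      calc ENNReal.ofReal (min p (1 - p)) * ENNReal.ofReal ((min p (1-p)) ^ m)
          ≤ ENNReal.ofReal p * ν (Metric.ball (piL l j / l) (ε / l)) := by
            rw [hyl]
            exact mul_le_mul' (ENNReal.ofReal_le_ofReal (min_le_left _ _)) hIH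
        _ ≤ _ := le_self_add
    · have hyl : piL l j / l - 1 = piL l (shiftN j 1) := by
        rw [hy, h0]; push_cast; field_simp; ring
      calc ENNReal.ofReal (min p (1 - p)) * ENNReal.ofReal ((min p (1-p)) ^ m)
          ≤ ENNReal.ofReal (1 - p) * ν (Metric.ball (piL l j / l - 1) (ε / l)) := by
            rw [hyl]
            exact mul_le_mul' (ENNReal.ofReal_le_ofReal (min_le_right _ _)) hIH
        _ ≤ _ := le_add_self

lemma div_antitone_neg {a b1 b2 : ℝ} (ha : a ≤ 0) (hb2 : b2 < 0) (h : b1 ≤ b2) :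
    a / b1 ≤ a / b2 := by
  have hb1 : b1 < 0 := h.trans_lt hb2
  rcases ha.lt_or_eq with ha' | ha'
  · have h1 : a / b1 = (-a) / (-b1) := by rw [neg_div_neg_eq]
    have h2 : a / b2 = (-a) / (-b2) := by rw [neg_div_neg_eq]
    rw [h1, h2]
    gcongr
    · linarith
    · linarith
  · subst ha'; rw [zero_div, zero_div]

lemma div_flip_neg {a b c : ℝ} (h : a ≤ b) (hc : c < 0) : b / c ≤ a / c := by
  rw [div_eq_mul_inv, div_eq_mul_inv]
  exact mul_le_mul_of_nonpos_right h (inv_nonpos.2 hc.le)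


lemma prod_weights (i : ℕ → ℕ) {p : ℝ} (hp0 : 0 < p) (hp1 : p < 1) (n : ℕ) :
    (∏ k ∈ Finset.range n, if i k = 0 then ENNReal.ofReal p else ENNReal.ofReal (1 - p)) =
    ENNReal.ofReal (p ^ countZeros i n * (1 - p) ^ (n - countZeros i n)) := by
  classical
  rw [countZeros, Finset.prod_ite, Finset.prod_const, Finset.prod_const]
  have hcard : (Finset.filter (fun m => ¬ i m = 0) (Finset.range n)).card =
      n - (Finset.filter (fun m => i m = 0) (Finset.range n)).card := by
    have := Finset.card_filter_add_card_filter_not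
      (s := Finset.range n) (p := fun m => i m = 0)
    simp only [Finset.card_range] at this
    omega
  rw [hcard, ENNReal.ofReal_mul (by positivity), ← ENNReal.ofReal_pow hp0.le,
    ← ENNReal.ofReal_pow (by linarith)]

lemma countZeros_le (i : ℕ → ℕ) (n : ℕ) : countZeros i n ≤ n := by
  rw [countZeros]
  exact (Finset.card_filter_le _ _).trans_eq (Finset.card_range n)


theorem stmt8 (l p δ r : ℝ) (hl0 : 0 < l) (hl1 : l < 1) (hp0 : 0 < p) (hp1 : p < 1)
    (hδ : 0 < δ)
    (ν : Measure ℝ) [IsProbabilityMeasure ν]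
    (hss : ν = ENNReal.ofReal p • ν.map (fun x => l * (x + 0)) +
      ENNReal.ofReal (1 - p) • ν.map (fun x => l * (x + 1)))
    (hsupp : ν (Set.Icc 0 (l / (1 - l)))ᶜ = 0)
    (x : ℝ) (hx : x ∈ Set.Icc 0 (l / (1 - l)))
    (i : ℕ → ℕ) (hib : binSeq i) (hix : piL l i = x)
    (huniq : ∀ j : ℕ → ℕ, binSeq j → piL l j = x → j = i)
    (horb : ∀ n : ℕ, (i n = 0 → piL l (shiftN i n) ≤ l - δ) ∧
      (i n = 1 → piL l (shiftN i n) ≥ l ^ 2 / (1 - l) + δ))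
    (hfreq : Filter.Tendsto (fun n : ℕ => (countZeros i n : ℝ) / n) Filter.atTop (nhds r)) :
    Filter.Tendsto (fun ρ : ℝ => Real.log (ν (Metric.ball x ρ)).toReal / Real.log ρ)
      (nhdsWithin 0 (Set.Ioi 0))
      (nhds ((r * Real.log p + (1 - r) * Real.log (1 - p)) / Real.log l)) := by
  classical
  have hp1' : 0 < 1 - p := by linarith
  have hl1' : 0 < 1 - l := by linarith
  have hLneg : Real.log l < 0 := Real.log_neg hl0 hl1
  -- choose m for the lower-bound constant
  obtain ⟨m, hm⟩ : ∃ m : ℕ, l / (1 - l) * l ^ m < δ * l := by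
    obtain ⟨m, hm⟩ := exists_pow_lt_of_lt_one (show (0:ℝ) < δ * (1 - l) by positivity) hl1
    refine ⟨m, ?_⟩
    have h1 : l / (1 - l) * l ^ m < l / (1 - l) * (δ * (1 - l)) := by
      apply mul_lt_mul_of_pos_left hm (by positivity)
    calc l / (1 - l) * l ^ m < l / (1 - l) * (δ * (1 - l)) := h1
      _ = δ * l := by field_simp
  set c : ℝ := (min p (1 - p)) ^ m with hc_def
  have hc0 : 0 < c := pow_pos (lt_min hp0 hp1') m
  have hc1 : c ≤ 1 := pow_le_one₀ (le_min hp0.le hp1'.le) (min_le_left _ _ |>.trans hp1.le)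
  set W : ℕ → ℝ := fun n => p ^ countZeros i n * (1 - p) ^ (n - countZeros i n) with hW_def
  have hW0 : ∀ n, 0 < W n := fun n => by positivity
  have hW1 : ∀ n, W n ≤ 1 := fun n =>
    mul_le_one₀ (pow_le_one₀ hp0.le hp1.le) (by positivity) (pow_le_one₀ hp1'.le (by linarith))
  -- measure bounds
  have hiter := iter_eq hl0 hl1 hδ ν hss hsupp hib horb
  have hmeq : ∀ n : ℕ, ν (Metric.ball x (δ * l * l ^ n)) =
      ENNReal.ofReal (W n) * ν (Metric.ball (piL l (shiftN i n)) (δ * l)) := by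
    intro n
    rw [← hix, hiter n (δ * l) (by positivity) (by nlinarith), prod_weights i hp0 hp1 n]
  have hub : ∀ n : ℕ, ν (Metric.ball x (δ * l * l ^ n)) ≤ ENNReal.ofReal (W n) := by
    intro n
    rw [hmeq n]
    calc ENNReal.ofReal (W n) * ν (Metric.ball (piL l (shiftN i n)) (δ * l))
        ≤ ENNReal.ofReal (W n) * 1 := by
          exact mul_le_mul_right prob_le_one _
      _ = ENNReal.ofReal (W n) := mul_one _
  have hlb : ∀ n : ℕ, ENNReal.ofReal (c * W n) ≤ ν (Metric.ball x (δ * l * l ^ n)) := by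
    intro n
    rw [hmeq n, ENNReal.ofReal_mul hc0.le, mul_comm (ENNReal.ofReal c)]
    exact mul_le_mul_right
      (lower_bound hl0 hl1 hp0 hp1 ν hss hsupp m (shiftN i n) (shiftN_binSeq hib n) (δ * l) hm) _
  -- real versions
  have hfin : ∀ ρ : ℝ, ν (Metric.ball x ρ) ≠ ⊤ := fun ρ => measure_ne_top ν _
  have hubR : ∀ n : ℕ, (ν (Metric.ball x (δ * l * l ^ n))).toReal ≤ W n := fun n =>
    ENNReal.toReal_le_of_le_ofReal (hW0 n).le (hub n)
  have hlbR : ∀ n : ℕ, c * W n ≤ (ν (Metric.ball x (δ * l * l ^ n))).toReal := fun n =>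
    (ENNReal.ofReal_le_iff_le_toReal (hfin _)).mp (hlb n)
  -- logarithmic asymptotics
  set u : ℕ → ℝ := fun n => Real.log (W n) with hu_def
  have hu : ∀ n : ℕ, u n = (countZeros i n : ℝ) * Real.log p +
      ((n : ℝ) - (countZeros i n : ℝ)) * Real.log (1 - p) := by
    intro n
    have h1 : ((n - countZeros i n : ℕ) : ℝ) = (n : ℝ) - (countZeros i n : ℝ) :=
      Nat.cast_sub (countZeros_le i n)
    rw [hu_def]
    simp only [hW_def]
    rw [Real.log_mul (by positivity) (by positivity), Real.log_pow, Real.log_pow, h1]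
  set num : ℝ := r * Real.log p + (1 - r) * Real.log (1 - p) with hnum_def
  have hnum : Filter.Tendsto (fun n : ℕ => u n / n) Filter.atTop (nhds num) := by
    have hbase : Filter.Tendsto (fun n : ℕ => ((countZeros i n : ℝ) / n) * Real.log p +
        (1 - (countZeros i n : ℝ) / n) * Real.log (1 - p)) Filter.atTop (nhds num) :=
      (hfreq.mul_const _).add ((tendsto_const_nhds.sub hfreq).mul_const _)
    apply hbase.congr'
    filter_upwards [Filter.eventually_ge_atTop 1] with n hn
    have hn0 : (n : ℝ) ≠ 0 := (Nat.cast_pos.mpr hn).ne'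
    rw [hu n]
    field_simp
  have h0 : Filter.Tendsto (fun n : ℕ => (1 : ℝ) / n) Filter.atTop (nhds 0) :=
    tendsto_one_div_atTop_nhds_zero_nat
  have hden : ∀ k : ℝ, Filter.Tendsto
      (fun n : ℕ => (Real.log δ + ((n : ℝ) + k) * Real.log l) / n)
      Filter.atTop (nhds (Real.log l)) := by
    intro k
    have hbase : Filter.Tendsto (fun n : ℕ =>
        (Real.log δ + k * Real.log l) * (1 / n) + Real.log l) Filter.atTop
        (nhds ((Real.log δ + k * Real.log l) * 0 + Real.log l)) :=
      (h0.const_mul _).add tendsto_const_nhds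
    rw [mul_zero, zero_add] at hbase
    apply hbase.congr'
    filter_upwards [Filter.eventually_ge_atTop 1] with n hn
    have hn0 : (n : ℝ) ≠ 0 := (Nat.cast_pos.mpr hn).ne'
    field_simp
    ring
  have hnum1 : Filter.Tendsto (fun n : ℕ => u (n + 1) / n) Filter.atTop (nhds num) := by
    have ha : Filter.Tendsto (fun n : ℕ => u (n + 1) / ((n : ℝ) + 1)) Filter.atTop (nhds num) := by
      have := hnum.comp (Filter.tendsto_add_atTop_nat 1)
      apply this.congr
      intro n
      simp [Function.comp]
    have hb : Filter.Tendsto (fun n : ℕ => ((n : ℝ) + 1) / n) Filter.atTop (nhds 1) := by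
      have hbase : Filter.Tendsto (fun n : ℕ => 1 + (1 : ℝ) / n) Filter.atTop
          (nhds (1 + 0)) := tendsto_const_nhds.add h0
      rw [add_zero] at hbase
      apply hbase.congr'
      filter_upwards [Filter.eventually_ge_atTop 1] with n hn
      have hn0 : (n : ℝ) ≠ 0 := (Nat.cast_pos.mpr hn).ne'
      field_simp
    have hmul := ha.mul hb
    rw [mul_one] at hmul
    apply hmul.congr'
    filter_upwards [Filter.eventually_ge_atTop 1] with n hn
    have hn0 : (n : ℝ) ≠ 0 := (Nat.cast_pos.mpr hn).ne'
    field_simp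
  set d : ℝ := num / Real.log l with hd_def
  have hg1 : Filter.Tendsto (fun n : ℕ => u n / (Real.log δ + ((n : ℝ) + 2) * Real.log l))
      Filter.atTop (nhds d) := by
    have := hnum.div (hden 2) hLneg.ne
    apply this.congr'
    filter_upwards [Filter.eventually_ge_atTop 1] with n hn
    have hn0 : (n : ℝ) ≠ 0 := (Nat.cast_pos.mpr hn).ne'
    simp only [Pi.div_apply]
    rw [div_div_div_comm, div_self hn0, div_one]
  have hg2 : Filter.Tendsto
      (fun n : ℕ => (Real.log c + u (n + 1)) / (Real.log δ + ((n : ℝ) + 1) * Real.log l))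
      Filter.atTop (nhds d) := by
    have hnum2 : Filter.Tendsto (fun n : ℕ => (Real.log c + u (n + 1)) / n)
        Filter.atTop (nhds num) := by
      have hbase := (h0.const_mul (Real.log c)).add hnum1
      rw [mul_zero, zero_add] at hbase
      apply hbase.congr
      intro n
      rw [add_div]
      ring_nf
    have := hnum2.div (hden 1) hLneg.ne
    apply this.congr'
    filter_upwards [Filter.eventually_ge_atTop 1] with n hn
    have hn0 : (n : ℝ) ≠ 0 := (Nat.cast_pos.mpr hn).ne'
    simp only [Pi.div_apply]
    rw [div_div_div_comm, div_self hn0, div_one]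
  -- denominators eventually negative
  have h1top : Filter.Tendsto (fun n : ℕ => ((n : ℝ) + 1)) Filter.atTop Filter.atTop :=
    Filter.tendsto_atTop_add_const_right Filter.atTop 1 tendsto_natCast_atTop_atTop
  have h2bot : Filter.Tendsto (fun n : ℕ => ((n : ℝ) + 1) * Real.log l)
      Filter.atTop Filter.atBot := h1top.atTop_mul_const_of_neg hLneg
  have hdiv : Filter.Tendsto (fun n : ℕ => Real.log δ + ((n : ℝ) + 1) * Real.log l)
      Filter.atTop Filter.atBot :=
    Filter.tendsto_atBot_add_const_left Filter.atTop (Real.log δ) h2bot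
  -- epsilon argument
  rw [Metric.tendsto_nhdsWithin_nhds]
  intro ε hε
  obtain ⟨N1, hN1⟩ := Metric.tendsto_atTop.mp hg1 ε hε
  obtain ⟨N2, hN2⟩ := Metric.tendsto_atTop.mp hg2 ε hε
  obtain ⟨N3, hN3⟩ := Filter.eventually_atTop.mp
    (hdiv.eventually (Filter.eventually_lt_atBot 0))
  set N := max N1 (max N2 N3) with hN_def
  refine ⟨δ * l ^ (N + 2), by positivity, ?_⟩
  intro ρ hρmem hρdist
  have hρ0 : (0:ℝ) < ρ := hρmem
  have hρlt : ρ < δ * l ^ (N + 2) := by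
    rwa [Real.dist_eq, sub_zero, abs_of_pos hρ0] at hρdist
  have hex : ∃ k : ℕ, δ * l ^ (k + 1) < ρ := by
    obtain ⟨k, hk⟩ := exists_pow_lt_of_lt_one (show (0:ℝ) < ρ / δ by positivity) hl1
    refine ⟨k, ?_⟩
    have h3 : l ^ (k + 1) ≤ l ^ k := pow_le_pow_of_le_one hl0.le hl1.le (Nat.le_succ k)
    have h4 : δ * l ^ k < ρ := by
      have := mul_lt_mul_of_pos_left hk hδ
      rwa [mul_div_cancel₀ _ hδ.ne'] at this
    nlinarith [pow_pos hl0 k]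
  have hfind : δ * l ^ (Nat.find hex + 1) < ρ := Nat.find_spec hex
  have hNle : N + 1 ≤ Nat.find hex := by
    rw [Nat.le_find_iff]
    intro k hk
    rw [not_lt]
    have h5 : l ^ (N + 2) ≤ l ^ (k + 1) :=
      pow_le_pow_of_le_one hl0.le hl1.le (by omega)
    nlinarith
  set n := Nat.find hex - 1 with hn_def
  have hneq : Nat.find hex = n + 1 := by omega
  have hnN : N ≤ n := by omega
  have hρle : ρ ≤ δ * l ^ (n + 1) := by
    have h6 := Nat.find_min hex (show n < Nat.find hex by omega)
    linarith [not_lt.mp h6]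
  have hρgt : δ * l ^ (n + 2) < ρ := by
    rw [hneq] at hfind
    exact hfind
  -- measure value bounds
  set B : ℝ := (ν (Metric.ball x ρ)).toReal with hB_def
  have hBub : B ≤ W n := by
    refine le_trans ?_ (hubR n)
    refine ENNReal.toReal_mono (hfin _) (measure_mono (Metric.ball_subset_ball ?_))
    calc ρ ≤ δ * l ^ (n + 1) := hρle
      _ = δ * l * l ^ n := by ring
  have hBlb : c * W (n + 1) ≤ B := by
    refine le_trans (hlbR (n + 1)) ?_
    refine ENNReal.toReal_mono (hfin _) (measure_mono (Metric.ball_subset_ball ?_))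
    calc δ * l * l ^ (n + 1) = δ * l ^ (n + 2) := by ring
      _ ≤ ρ := hρgt.le
  have hB0 : (0:ℝ) < B := lt_of_lt_of_le (by positivity) hBlb
  -- log bounds
  have hlogρ_le : Real.log ρ ≤ Real.log δ + ((n : ℝ) + 1) * Real.log l := by
    have h7 : Real.log ρ ≤ Real.log (δ * l ^ (n + 1)) := Real.log_le_log hρ0 hρle
    rwa [Real.log_mul hδ.ne' (pow_ne_zero _ hl0.ne'), Real.log_pow, Nat.cast_add,
      Nat.cast_one] at h7
  have hlogρ_ge : Real.log δ + ((n : ℝ) + 2) * Real.log l ≤ Real.log ρ := by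
    have h7 : Real.log (δ * l ^ (n + 2)) ≤ Real.log ρ :=
      Real.log_le_log (by positivity) hρgt.le
    rwa [Real.log_mul hδ.ne' (pow_ne_zero _ hl0.ne'), Real.log_pow, Nat.cast_add,
      Nat.cast_ofNat] at h7
  have hdenneg : Real.log δ + ((n : ℝ) + 1) * Real.log l < 0 :=
    hN3 n (le_trans (le_trans (le_max_right N2 N3) (le_max_right N1 _)) hnN)
  have hlogρ_neg : Real.log ρ < 0 := lt_of_le_of_lt hlogρ_le hdenneg
  have hun_le : u n ≤ 0 := Real.log_nonpos (hW0 n).le (hW1 n)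
  have hcu_le : Real.log c + u (n + 1) ≤ 0 :=
    add_nonpos (Real.log_nonpos hc0.le hc1) (Real.log_nonpos (hW0 (n+1)).le (hW1 (n+1)))
  have hlogB_le : Real.log B ≤ u n := Real.log_le_log hB0 hBub
  have hlogB_ge : Real.log c + u (n + 1) ≤ Real.log B := by
    rw [← Real.log_mul hc0.ne' (hW0 (n + 1)).ne']
    exact Real.log_le_log (by positivity) hBlb
  have hup : Real.log B / Real.log ρ ≤
      (Real.log c + u (n + 1)) / (Real.log δ + ((n : ℝ) + 1) * Real.log l) :=
    le_trans (div_flip_neg hlogB_ge hlogρ_neg) (div_antitone_neg hcu_le hdenneg hlogρ_le)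
  have hlow : u n / (Real.log δ + ((n : ℝ) + 2) * Real.log l) ≤ Real.log B / Real.log ρ :=
    le_trans (div_antitone_neg hun_le hlogρ_neg hlogρ_ge) (div_flip_neg hlogB_le hlogρ_neg)
  have hd1 := hN1 n (le_trans (le_max_left _ _) hnN)
  have hd2 := hN2 n (le_trans (le_trans (le_max_left N2 N3) (le_max_right N1 _)) hnN)
  rw [Real.dist_eq, abs_lt] at hd1 hd2
  show dist (Real.log B / Real.log ρ) d < ε
  rw [Real.dist_eq, abs_lt]
  constructor
  · linarith [hd1.1, hlow]
  · linarith [hd2.2, hup]
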